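/- arXiv:math/0605275 — 2 statements merged into one kernel-verified Lean document; each statement's English description precedes it below -/
import Mathlib

section
/- For graphs A, B, C, if A is connected and has more than one vertex, then the poset Hom(A, B ⨿ C) is isomorphic to the disjoint union of posets Hom(A,B) ⨿ Hom(A,C). -/
/-- A graph: a symmetric relation on a vertex set, loops allowed. -/
structure LGraph (V : Type) : Type where
  Adj : V → V → Prop
  symm : ∀ u v : V, Adj u v → Adj v u

/-- A graph homomorphism: a vertex map preserving adjacency. -/
def LGraph.IsHom {V W : Type} (G : LGraph V) (H : LGraph W) (f : V → W) : Prop :=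
  ∀ u v : V, G.Adj u v → H.Adj (f u) (f v)

/-- The categorical product of graphs. -/
def LGraph.prod {V W : Type} (G : LGraph V) (H : LGraph W) : LGraph (V × W) :=
  ⟨fun p q => G.Adj p.1 q.1 ∧ H.Adj p.2 q.2,
   fun p q h => ⟨G.symm _ _ h.1, H.symm _ _ h.2⟩⟩

/-- The categorical exponential graph `H^G`: vertices are all functions `V(G) → V(H)`. -/
def LGraph.exp {V W : Type} (G : LGraph V) (H : LGraph W) : LGraph (V → W) :=
  ⟨fun f f' => ∀ v v' : V, G.Adj v v' → H.Adj (f v) (f' v'),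
   fun f f' h v v' hvv' => H.symm _ _ (h v' v (G.symm _ _ hvv'))⟩

/-- Multihomomorphisms between graphs. -/
def LGraph.IsMultiHom {V W : Type} (G : LGraph V) (H : LGraph W) (η : V → Set W) : Prop :=
  (∀ v, (η v).Nonempty) ∧
    ∀ x y : V, G.Adj x y → ∀ x' ∈ η x, ∀ y' ∈ η y, H.Adj x' y'

/-- The Hom poset, ordered by pointwise containment. -/
def MultiHom {V W : Type} (G : LGraph V) (H : LGraph W) : Type :=
  {η : V → Set W // LGraph.IsMultiHom G H η}

instance {V W : Type} (G : LGraph V) (H : LGraph W) : PartialOrder (MultiHom G H) :=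
  Subtype.partialOrder _

/-- The reflexive path `Iₙ` on `{0, …, n}`. -/
def pathGraph (n : ℕ) : LGraph (Fin (n + 1)) :=
  ⟨fun i j => (i : ℕ) = j ∨ (i : ℕ) + 1 = j ∨ (j : ℕ) + 1 = i,
   fun i j h => by tauto⟩

/-- ×-homotopy of vertex maps. -/
def Homotopic {V W : Type} (G : LGraph V) (H : LGraph W) (f g : V → W) : Prop :=
  ∃ n : ℕ, 1 ≤ n ∧ ∃ F : V × Fin (n + 1) → W,
    (G.prod (pathGraph n)).IsHom H F ∧
    (∀ v, F (v, 0) = f v) ∧ (∀ v, F (v, Fin.last n) = g v)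

/-- The singleton-valued multihomomorphism associated to a graph homomorphism. -/
def singletonMH {V W : Type} {G : LGraph V} {H : LGraph W} (f : V → W)
    (hf : G.IsHom H f) : MultiHom G H :=
  ⟨fun v => {f v},
   ⟨fun v => ⟨f v, rfl⟩, fun x y hxy x' hx' y' hy' => by
      simp only [Set.mem_singleton_iff] at hx' hy'
      subst hx'; subst hy'; exact hf _ _ hxy⟩⟩

/-- Disjoint union (coproduct) of graphs. -/
def LGraph.coprod {V W : Type} (G : LGraph V) (H : LGraph W) : LGraph (V ⊕ W) :=
  ⟨Sum.LiftRel G.Adj H.Adj,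
   fun u v h => by
    cases h with
    | inl h => exact Sum.LiftRel.inl (G.symm _ _ h)
    | inr h => exact Sum.LiftRel.inr (H.symm _ _ h)⟩

/-- The induced subgraph obtained by deleting the vertex `v`. -/
def LGraph.deleteVert {V : Type} (G : LGraph V) (v : V) : LGraph {x : V // x ≠ v} :=
  ⟨fun a b => G.Adj a.1 b.1, fun a b h => G.symm _ _ h⟩

/-- The cartesian (box) product of graphs. -/
def LGraph.box {V W : Type} (G : LGraph V) (H : LGraph W) : LGraph (V × W) :=
  ⟨fun p q => (G.Adj p.1 q.1 ∧ p.2 = q.2) ∨ (p.1 = q.1 ∧ H.Adj p.2 q.2),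
   fun p q h => by
    rcases h with ⟨h1, h2⟩ | ⟨h1, h2⟩
    · exact Or.inl ⟨G.symm _ _ h1, h2.symm⟩
    · exact Or.inr ⟨h1.symm, H.symm _ _ h2⟩⟩

/-- The cartesian exponential graph: vertices are the graph homomorphisms. -/
def LGraph.cartExp {V W : Type} (G : LGraph V) (H : LGraph W) :
    LGraph {f : V → W // G.IsHom H f} :=
  ⟨fun f f' => ∀ b, H.Adj (f.1 b) (f'.1 b), fun f f' h b => H.symm _ _ (h b)⟩

/-- A ×-homotopy equivalence of graphs. -/
def HtpyEquiv {V W : Type} (G : LGraph V) (H : LGraph W) (f : V → W) : Prop :=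
  G.IsHom H f ∧ ∃ g : W → V, H.IsHom G g ∧
    Homotopic G G (g ∘ f) id ∧ Homotopic H H (f ∘ g) id

/-- The one-point looped graph. -/
def oneGraph : LGraph Unit := ⟨fun _ _ => True, fun _ _ _ => trivial⟩

section Stmt3Aux
variable {VA VB VC : Type} {A : LGraph VA} {B : LGraph VB} {C : LGraph VC}

lemma side_const [Nontrivial VA] (hconn : ∀ u v : VA, Relation.ReflTransGen A.Adj u v)
    (η : MultiHom A (B.coprod C)) :
    ∃ s : Bool, ∀ v, ∀ x ∈ η.1 v, x.isLeft = s := by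
  obtain ⟨a, b, hab⟩ := exists_pair_ne VA
  rcases (hconn a b).cases_head with h | ⟨w, haw, _⟩
  · exact absurd h hab
  obtain ⟨y0, hy0⟩ := η.2.1 w
  refine ⟨y0.isLeft, ?_⟩
  have base : ∀ x ∈ η.1 a, x.isLeft = y0.isLeft := by
    intro x hx
    have h := η.2.2 a w haw x hx y0 hy0
    cases h <;> rfl
  have step : ∀ u v, A.Adj u v → (∀ x ∈ η.1 u, x.isLeft = y0.isLeft) →
      ∀ y ∈ η.1 v, y.isLeft = y0.isLeft := by
    intro u v huv hu y hy
    obtain ⟨x0, hx0⟩ := η.2.1 u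
    have h := η.2.2 u v huv x0 hx0 y hy
    have hx := hu x0 hx0
    cases h <;> simpa using hx
  intro v
  induction hconn a v with
  | refl => exact base
  | tail _ h2 ih => exact step _ _ h2 ih

lemma all_right_of_not_left {η : MultiHom A (B.coprod C)}
    (hside : ∃ s : Bool, ∀ v, ∀ x ∈ η.1 v, x.isLeft = s)
    (h : ¬ ∀ v, ∀ x ∈ η.1 v, x.isLeft = true) :
    ∀ v, ∀ x ∈ η.1 v, x.isLeft = false := by
  obtain ⟨s, hs⟩ := hside
  cases s
  · exact hs
  · exact absurd hs h

def leftPart (η : MultiHom A (B.coprod C))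
    (h : ∀ v, ∀ x ∈ η.1 v, x.isLeft = true) : MultiHom A B :=
  ⟨fun v => {b | Sum.inl b ∈ η.1 v}, by
    constructor
    · intro v
      obtain ⟨x, hx⟩ := η.2.1 v
      obtain ⟨b, rfl⟩ := Sum.isLeft_iff.1 (h v x hx)
      exact ⟨b, hx⟩
    · intro x y hxy x' hx' y' hy'
      have h := η.2.2 x y hxy _ hx' _ hy'
      cases h with | inl h => exact h⟩

def rightPart (η : MultiHom A (B.coprod C))
    (h : ∀ v, ∀ x ∈ η.1 v, x.isLeft = false) : MultiHom A C :=
  ⟨fun v => {c | Sum.inr c ∈ η.1 v}, by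
    constructor
    · intro v
      obtain ⟨x, hx⟩ := η.2.1 v
      obtain ⟨c, rfl⟩ := Sum.isRight_iff.1 (by simpa using h v x hx)
      exact ⟨c, hx⟩
    · intro x y hxy x' hx' y' hy'
      have h := η.2.2 x y hxy _ hx' _ hy'
      cases h with | inr h => exact h⟩

def inlMH (θ : MultiHom A B) : MultiHom A (B.coprod C) :=
  ⟨fun v => Sum.inl '' θ.1 v, by
    constructor
    · intro v; exact (θ.2.1 v).image _
    · rintro x y hxy _ ⟨b, hb, rfl⟩ _ ⟨b', hb', rfl⟩
      exact Sum.LiftRel.inl (θ.2.2 x y hxy b hb b' hb')⟩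

def inrMH (θ : MultiHom A C) : MultiHom A (B.coprod C) :=
  ⟨fun v => Sum.inr '' θ.1 v, by
    constructor
    · intro v; exact (θ.2.1 v).image _
    · rintro x y hxy _ ⟨c, hc, rfl⟩ _ ⟨c', hc', rfl⟩
      exact Sum.LiftRel.inr (θ.2.2 x y hxy c hc c' hc')⟩

end Stmt3Aux

/-- for connected `A` with more than one vertex,
`Hom(A, B ⨿ C) ≅ Hom(A,B) ⨿ Hom(A,C)` as posets. -/
theorem stmt_3 {VA VB VC : Type} (A : LGraph VA) (B : LGraph VB) (C : LGraph VC)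
    [Nontrivial VA] (hconn : ∀ u v : VA, Relation.ReflTransGen A.Adj u v) :
    Nonempty (MultiHom A (B.coprod C) ≃o (MultiHom A B) ⊕ (MultiHom A C)) := by
    classical
  refine ⟨⟨⟨fun η => if h : ∀ v, ∀ x ∈ η.1 v, x.isLeft = true then
      Sum.inl (leftPart η h)
    else Sum.inr (rightPart η (all_right_of_not_left (side_const hconn η) h)),
    fun z => Sum.elim inlMH inrMH z, ?_, ?_⟩, ?_⟩⟩
  · -- left_inv
    intro η
    by_cases h : ∀ v, ∀ x ∈ η.1 v, x.isLeft = true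
    · simp only [dif_pos h]
      apply Subtype.ext; funext v; ext x
      constructor
      · rintro ⟨b, hb, rfl⟩; exact hb
      · intro hx
        obtain ⟨b, rfl⟩ := Sum.isLeft_iff.1 (h v x hx)
        exact ⟨b, hx, rfl⟩
    · simp only [dif_neg h]
      have h' := all_right_of_not_left (side_const hconn η) h
      apply Subtype.ext; funext v; ext x
      constructor
      · rintro ⟨c, hc, rfl⟩; exact hc
      · intro hx
        obtain ⟨c, rfl⟩ := Sum.isRight_iff.1 (by simpa using h' v x hx)
        exact ⟨c, hx, rfl⟩
  · -- right_inv
    rintro (θ | θ)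
    · have h : ∀ v, ∀ x ∈ ((inlMH θ : MultiHom A (B.coprod C)).1 v), x.isLeft = true := by
        rintro v _ ⟨b, _, rfl⟩; rfl
      simp only [Sum.elim_inl, dif_pos h]
      refine (dif_pos h).trans ?_
      congr 1
      apply Subtype.ext; funext v; ext b
      simp [leftPart, inlMH]
    · have h : ¬ ∀ v, ∀ x ∈ ((inrMH θ : MultiHom A (B.coprod C)).1 v), x.isLeft = true := by
        intro h
        obtain ⟨v⟩ : Nonempty VA := ⟨Classical.ofNonempty⟩
        obtain ⟨c, hc⟩ := θ.2.1 v
        simpa using h v (Sum.inr c) ⟨c, hc, rfl⟩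
      simp only [Sum.elim_inr, dif_neg h]
      refine (dif_neg h).trans ?_
      congr 1
      apply Subtype.ext; funext v; ext c
      simp [rightPart, inrMH]
  · -- map_rel_iff'
    intro η η'
    simp only [Equiv.coe_fn_mk]
    by_cases h : ∀ v, ∀ x ∈ η.1 v, x.isLeft = true <;>
      by_cases h' : ∀ v, ∀ x ∈ η'.1 v, x.isLeft = true
    · simp only [dif_pos h, dif_pos h', Sum.inl_le_inl_iff]
      constructor
      · intro hle
        intro v x hx
        obtain ⟨b, rfl⟩ := Sum.isLeft_iff.1 (h v x hx)
        exact hle v hx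
      · intro hle v b hb
        exact hle v hb
    · simp only [dif_pos h, dif_neg h', Sum.not_inl_le_inr, false_iff]
      have h'' := all_right_of_not_left (side_const hconn η') h'
      intro hle
      obtain ⟨v⟩ : Nonempty VA := ⟨Classical.ofNonempty⟩
      obtain ⟨x, hx⟩ := η.2.1 v
      have := h'' v x (hle v hx)
      rw [h v x hx] at this
      exact Bool.noConfusion this
    · simp only [dif_neg h, dif_pos h', Sum.not_inr_le_inl, false_iff]
      have h'' := all_right_of_not_left (side_const hconn η) h
      intro hle
      obtain ⟨v⟩ : Nonempty VA := ⟨Classical.ofNonempty⟩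
      obtain ⟨x, hx⟩ := η.2.1 v
      have := h' v x (hle v hx)
      rw [h'' v x hx] at this
      exact Bool.noConfusion this
    · simp only [dif_neg h, dif_neg h', Sum.inr_le_inr_iff]
      have hη := all_right_of_not_left (side_const hconn η) h
      constructor
      · intro hle v x hx
        obtain ⟨c, rfl⟩ := Sum.isRight_iff.1 (by simpa using hη v x hx)
        exact hle v hx
      · intro hle v c hc
        exact hle v hc
end

section
/- If G is a stiff graph, then the identity homomorphism id_G is an isolated point of the poset Hom(G,G): the only element α ∈ Hom(G,G) comparable with id_G is id_G itself. Equivalently, any α ∈ Hom(G,G) with x ∈ α(x) for all x must satisfy α(x) = {x} for all x. -/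
/-- if `G` is stiff, the identity is isolated in `Hom(G,G)`. -/
theorem stmt_14 {V : Type} (G : LGraph V)
    (hstiff : ∀ u v : V, u ≠ v → ¬ (∀ w, G.Adj v w → G.Adj u w)) :
    (∀ α : MultiHom G G,
      (α ≤ singletonMH id (fun _ _ h => h) ∨ singletonMH id (fun _ _ h => h) ≤ α) →
      α = singletonMH id (fun _ _ h => h)) ∧
    (∀ α : MultiHom G G, (∀ x, x ∈ α.1 x) → ∀ x, α.1 x = {x}) := by
  have key : ∀ α : MultiHom G G, (∀ x, x ∈ α.1 x) → ∀ x, α.1 x = {x} := by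
    intro α hα x
    ext y
    simp only [Set.mem_singleton_iff]
    constructor
    · intro hy
      by_contra hne
      exact hstiff y x hne (fun w hw => α.2.2 x w hw y hy w (hα w))
    · rintro rfl
      exact hα _
  refine ⟨?_, key⟩
  intro α h
  have hid : ∀ x, x ∈ α.1 x := by
    rcases h with h | h
    · intro x
      have h' : α.1 x ⊆ {x} := h x
      obtain ⟨y, hy⟩ := α.2.1 x
      have := h' hy
      simp only [Set.mem_singleton_iff, singletonMH] at this
      rwa [this] at hy
    · intro x
      have h' : ({x} : Set V) ⊆ α.1 x := h x
      exact h' rfl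
  exact Subtype.ext (funext fun x => key α hid x)
end
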